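/- Let f : ℝ^n × ℝ^m → ℝ be twice differentiable, μ-strongly convex in x and μ-strongly concave in y, with ∇_x f and ∇_y f L-Lipschitz in (x,y). For any point (x, y), letting y*(x) = argmax_{y'} f(x, y') and x*(y) = argmin_{x'} f(x', y), the duality gap satisfies f(x, y*(x)) − f(x*(y), y) ≤ (L/μ²)·m(z), where m(z) = (1/2)(‖∇_x f(x,y)‖² + ‖∇_y f(x,y)‖²). -/

import Mathlib

open Set InnerProductSpace

local notation "⟪" x ", " y "⟫" => @inner ℝ _ _ x y

section aux
variable {E : Type*} [NormedAddCommGroup E] [InnerProductSpace ℝ E] [CompleteSpace E]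

lemma strong_convex_tangent {μ : ℝ} {g : E → ℝ} (hg : StrongConvexOn Set.univ μ g)
    {x : E} (hd : DifferentiableAt ℝ g x) (x' : E) :
    g x + ⟪gradient g x, x' - x⟫ + μ / 2 * ‖x' - x‖ ^ 2 ≤ g x' := by
  set v := x' - x with hv
  have hc : ConvexOn ℝ (Set.univ : Set E) (fun z => g z - μ / 2 * ‖z‖ ^ 2) :=
    strongConvexOn_iff_convex.mp hg
  -- the line t ↦ x + t • v
  have hline : HasDerivAt (fun t : ℝ => x + t • v) v 0 := by
    simpa using ((hasDerivAt_id (0:ℝ)).smul_const v).const_add x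
  -- derivative of g along the line
  have hgrad : HasGradientAt g (gradient g x) x := hd.hasGradientAt
  have hgF : HasFDerivAt g (toDual ℝ E (gradient g x)) x :=
    hasGradientAt_iff_hasFDerivAt.mp hgrad
  have hgF' : HasFDerivAt g (toDual ℝ E (gradient g x)) (x + (0:ℝ) • v) := by
    simpa using hgF
  have hcomp : HasDerivAt (fun t : ℝ => g (x + t • v)) ⟪gradient g x, v⟫ 0 := by
    exact hgF'.comp_hasDerivAt 0 hline
  -- derivative of the quadratic part along the line
  have hqeq : (fun t : ℝ => ‖x + t • v‖ ^ 2)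
      = fun t : ℝ => ‖x‖ ^ 2 + 2 * t * ⟪x, v⟫ + t ^ 2 * ‖v‖ ^ 2 := by
    funext t
    rw [norm_add_sq_real, real_inner_smul_right, norm_smul]
    simp [mul_pow]
    ring
  have hq : HasDerivAt (fun t : ℝ => ‖x + t • v‖ ^ 2) (2 * ⟪x, v⟫) 0 := by
    rw [hqeq]
    have h1 : HasDerivAt (fun t : ℝ => 2 * t * ⟪x, v⟫) (2 * ⟪x, v⟫) 0 := by
      simpa using (((hasDerivAt_id (0:ℝ)).const_mul (2:ℝ)).mul_const ⟪x, v⟫)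
    have h2 : HasDerivAt (fun t : ℝ => t ^ 2 * ‖v‖ ^ 2) 0 0 := by
      simpa using (hasDerivAt_pow 2 (0:ℝ)).mul_const (‖v‖ ^ 2)
    have h3 := (h1.const_add (‖x‖ ^ 2)).add h2
    rw [add_zero] at h3
    exact h3
  have hφ : HasDerivAt (fun t : ℝ => g (x + t • v) - μ / 2 * ‖x + t • v‖ ^ 2)
      (⟪gradient g x, v⟫ - μ / 2 * (2 * ⟪x, v⟫)) 0 :=
    hcomp.sub (hq.const_mul (μ / 2))
  -- convexity of the restriction to the line
  have hφc : ConvexOn ℝ (Set.univ : Set ℝ)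
      (fun t : ℝ => g (x + t • v) - μ / 2 * ‖x + t • v‖ ^ 2) := by
    have := hc.comp_affineMap (AffineMap.lineMap x x' : ℝ →ᵃ[ℝ] E)
    have heq : ∀ t : ℝ, (AffineMap.lineMap x x' : ℝ →ᵃ[ℝ] E) t = x + t • v := by
      intro t; simp [AffineMap.lineMap_apply, hv]; abel
    have hpre : ((AffineMap.lineMap x x' : ℝ →ᵃ[ℝ] E)) ⁻¹' Set.univ = Set.univ := by simp
    rw [hpre] at this
    have hfun : (fun t : ℝ => g (x + t • v) - μ / 2 * ‖x + t • v‖ ^ 2)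
        = (fun z => g z - μ / 2 * ‖z‖ ^ 2) ∘ (AffineMap.lineMap x x' : ℝ →ᵃ[ℝ] E) := by
      funext t; rw [Function.comp_apply, heq t]
    rw [hfun]; exact this
  have hslope := hφc.le_slope_of_hasDerivAt (Set.mem_univ 0) (Set.mem_univ 1) one_pos hφ
  have hs : slope (fun t : ℝ => g (x + t • v) - μ / 2 * ‖x + t • v‖ ^ 2) 0 1
      = (g x' - μ / 2 * ‖x'‖ ^ 2) - (g x - μ / 2 * ‖x‖ ^ 2) := by
    rw [slope_def_field]
    simp [hv]
  rw [hs] at hslope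
  have hnorm : ‖x' - x‖ ^ 2 = ‖x'‖ ^ 2 - ‖x‖ ^ 2 - 2 * ⟪x, v⟫ := by
    rw [hv, norm_sub_sq_real, inner_sub_right, real_inner_self_eq_norm_sq, real_inner_comm]
    ring
  rw [hnorm]
  linarith

lemma sub_le_grad_sq_div {μ : ℝ} (hμ : 0 < μ) {g : E → ℝ} (hg : StrongConvexOn Set.univ μ g)
    {x : E} (hd : DifferentiableAt ℝ g x) (x' : E) :
    g x - g x' ≤ ‖gradient g x‖ ^ 2 / (2 * μ) := by
  have h := strong_convex_tangent hg hd x'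
  have hinner : -⟪gradient g x, x' - x⟫ ≤ ‖gradient g x‖ * ‖x' - x‖ := by
    have := abs_real_inner_le_norm (gradient g x) (x' - x)
    have := neg_abs_le ⟪gradient g x, x' - x⟫
    linarith
  have hsq := sq_nonneg (‖gradient g x‖ - μ * ‖x' - x‖)
  rw [le_div_iff₀ (by positivity)]
  nlinarith [h, hinner, hsq, hμ, sq_nonneg ‖x' - x‖]
end aux

theorem merit_upper_bounds_duality_gap {n m : ℕ} (μ L : ℝ) (hμ : 0 < μ) (hμL : μ ≤ L)
    (f : EuclideanSpace ℝ (Fin n) → EuclideanSpace ℝ (Fin m) → ℝ)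
    (hdiff : ContDiff ℝ 2
      (fun z : EuclideanSpace ℝ (Fin n) × EuclideanSpace ℝ (Fin m) => f z.1 z.2))
    (hconv : ∀ y, StrongConvexOn Set.univ μ (fun x => f x y))
    (hconc : ∀ x, StrongConvexOn Set.univ μ (fun y => -f x y))
    (hLip : ∀ x y x' y',
      Real.sqrt (‖gradient (fun x'' => f x'' y) x - gradient (fun x'' => f x'' y') x'‖ ^ 2 +
                 ‖gradient (fun y'' => f x y'') y - gradient (fun y'' => f x' y'') y'‖ ^ 2)
        ≤ L * Real.sqrt (‖x - x'‖ ^ 2 + ‖y - y'‖ ^ 2))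
    (xstar : EuclideanSpace ℝ (Fin m) → EuclideanSpace ℝ (Fin n))
    (ystar : EuclideanSpace ℝ (Fin n) → EuclideanSpace ℝ (Fin m))
    (hxstar : ∀ y x', f (xstar y) y ≤ f x' y)
    (hystar : ∀ x y', f x y' ≤ f x (ystar x)) :
    ∀ x y, f x (ystar x) - f (xstar y) y
      ≤ (L / μ ^ 2) *
        (1 / 2 * (‖gradient (fun x' => f x' y) x‖ ^ 2 +
                  ‖gradient (fun y' => f x y') y‖ ^ 2)) := by
  intro x y
  have hd1 : Differentiable ℝ (fun x' => f x' y) := by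
    have : ContDiff ℝ 2 (fun x' : EuclideanSpace ℝ (Fin n) => f x' y) :=
      hdiff.comp (contDiff_id.prodMk contDiff_const)
    exact this.differentiable (by norm_num)
  have hd2 : Differentiable ℝ (fun y' => f x y') := by
    have : ContDiff ℝ 2 (fun y' : EuclideanSpace ℝ (Fin m) => f x y') :=
      hdiff.comp (contDiff_const.prodMk contDiff_id)
    exact this.differentiable (by norm_num)
  have A1 := sub_le_grad_sq_div hμ (hconv y) (hd1.differentiableAt (x := x)) (xstar y)
  have A2 := sub_le_grad_sq_div hμ (hconc x) ((hd2.neg).differentiableAt (x := y)) (ystar x)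
  -- rewrite the gradient of the negation
  have hgneg : gradient (fun y' => -f x y') y = -gradient (fun y' => f x y') y := by
    have hg := (hd2.differentiableAt (x := y)).hasGradientAt
    have hF := hasGradientAt_iff_hasFDerivAt.mp hg
    have : HasGradientAt (fun y' => -f x y') (-gradient (fun y' => f x y') y) y := by
      apply hasGradientAt_iff_hasFDerivAt.mpr
      rw [map_neg]; exact hF.neg
    exact this.gradient
  rw [hgneg, norm_neg] at A2
  set a := ‖gradient (fun x' => f x' y) x‖ ^ 2 with ha'
  set b := ‖gradient (fun y' => f x y') y‖ ^ 2 with hb'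
  have ha : (0:ℝ) ≤ a := sq_nonneg _
  have hb : (0:ℝ) ≤ b := sq_nonneg _
  have hle : 1 / (2 * μ) ≤ L / μ ^ 2 * (1 / 2) := by
    rw [div_mul_eq_mul_div, mul_one_div, div_le_div_iff₀ (by positivity) (by positivity)]
    nlinarith [mul_le_mul_of_nonneg_left hμL hμ.le]
  have key : a / (2 * μ) + b / (2 * μ) ≤ L / μ ^ 2 * (1 / 2 * (a + b)) := by
    have h1 : a / (2 * μ) + b / (2 * μ) = (a + b) * (1 / (2 * μ)) := by ring
    have h2 : L / μ ^ 2 * (1 / 2 * (a + b)) = (a + b) * (L / μ ^ 2 * (1 / 2)) := by ring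
    rw [h1, h2]
    exact mul_le_mul_of_nonneg_left hle (add_nonneg ha hb)
  have A2' : f x (ystar x) - f x y ≤ b / (2 * μ) := by
    have h := A2
    linarith
  linarith
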